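/- Let X be a Hausdorff topological space with a basis of compact open sets and 𝕜 a commutative unital ring. Let C_c(X,𝕜) be the ring of locally constant compactly supported functions X → 𝕜 under pointwise operations. Then the category of sheaves of 𝕜-modules on X is equivalent to the category of unitary right C_c(X,𝕜)-modules, via the compactly supported sections functor and the germ functor M ↦ (stalks M_x = colim_{x∈U} Mχ_U). -/

import Mathlib

open CategoryTheory

/-- The ring `C_c(X,𝕜)` of locally constant, compactly supported functions,
as a subset of `X → 𝕜` (with pointwise operations). -/
def Cc (X : Type) [TopologicalSpace X] (𝕜 : Type) [CommRing 𝕜] : Set (X → 𝕜) :=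
  {f | IsLocallyConstant f ∧ ∃ K : Set X, IsCompact K ∧ ∀ x, f x ≠ 0 → x ∈ K}

/-- A sheaf of `𝕜`-modules on `X`: a local homeomorphism `p : E → X` (encoded
via stalks, `E = Σ x, stalk x`, `p = Sigma.fst`) with a `𝕜`-module structure on
each stalk and continuous zero section, addition and scalar multiplication
(`𝕜` discrete). -/
structure SheafMod (X : Type) [TopologicalSpace X] (𝕜 : Type) [CommRing 𝕜] where
  stalk : X → Type
  addCommGroup : ∀ x, AddCommGroup (stalk x)
  module : ∀ x, Module 𝕜 (stalk x)
  topE : TopologicalSpace (Σ x, stalk x)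
  continuous_proj : Continuous (Sigma.fst : (Σ x, stalk x) → X)
  etale_proj : ∀ e : Σ x, stalk x, ∃ U : Set (Σ x, stalk x), e ∈ U ∧ IsOpen U ∧
    Set.InjOn Sigma.fst U ∧ ∀ V, V ⊆ U → IsOpen V → IsOpen (Sigma.fst '' V)
  continuous_zero : Continuous
    (fun x => (⟨x, @OfNat.ofNat _ 0 (@Zero.toOfNat0 _ (addCommGroup x).toZero)⟩ :
      Σ x, stalk x))
  continuous_add : Continuous
    (fun q : {q : (Σ x, stalk x) × (Σ x, stalk x) // q.1.1 = q.2.1} =>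
      (⟨q.1.1.1, @HAdd.hAdd _ _ _ (@instHAdd _ (addCommGroup q.1.1.1).toAdd)
        q.1.1.2 (cast (congrArg stalk q.2).symm q.1.2.2)⟩ : Σ x, stalk x))
  continuous_smul : ∀ c : 𝕜, Continuous
    (fun e : Σ x, stalk x =>
      (⟨e.1, @HSMul.hSMul 𝕜 _ _ (@instHSMul _ _ (module e.1).toSMul) c e.2⟩ :
        Σ x, stalk x))

attribute [instance] SheafMod.addCommGroup SheafMod.module SheafMod.topE

namespace SheafMod

variable {X : Type} [TopologicalSpace X] {𝕜 : Type} [CommRing 𝕜]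
  (F : SheafMod X 𝕜)

/-- Compactly supported continuous global sections. -/
def Γc : Set (∀ x, F.stalk x) :=
  {s | Continuous (fun x => (⟨x, s x⟩ : Σ x, F.stalk x)) ∧
    ∃ K : Set X, IsCompact K ∧ ∀ x, s x ≠ 0 → x ∈ K}

/-- The action of a function on a section: `(s·f)(x) = f(x) • s(x)`. -/
def actSec (s : ∀ x, F.stalk x) (f : X → 𝕜) : ∀ x, F.stalk x :=
  fun x => f x • s x

end SheafMod

/-- Morphisms of sheaves of `𝕜`-modules on `X`. -/
structure SheafModHom {X : Type} [TopologicalSpace X] {𝕜 : Type} [CommRing 𝕜]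
    (F₁ F₂ : SheafMod X 𝕜) where
  map : ∀ x, F₁.stalk x → F₂.stalk x
  map_add : ∀ x a b, map x (a + b) = map x a + map x b
  map_smul : ∀ (x) (c : 𝕜) (a), map x (c • a) = c • map x a
  continuous_map : Continuous
    (fun e : Σ x, F₁.stalk x => (⟨e.1, map e.1 e.2⟩ : Σ x, F₂.stalk x))

instance (X : Type) [TopologicalSpace X] (𝕜 : Type) [CommRing 𝕜] :
    Category (SheafMod X 𝕜) where
  Hom := SheafModHom
  id F := ⟨fun _ a => a, fun _ _ _ => rfl, fun _ _ _ => rfl, by exact continuous_id⟩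
  comp f g := ⟨fun x a => g.map x (f.map x a),
    by intro x a b; show g.map x (f.map x _) = _; rw [f.map_add, g.map_add],
    by intro x c a; show g.map x (f.map x _) = _; rw [f.map_smul, g.map_smul],
    by exact g.continuous_map.comp f.continuous_map⟩
  id_comp f := rfl
  comp_id f := rfl
  assoc f g h := rfl

/-- A unitary right `C_c(X,𝕜)`-module. -/
structure UnitaryCcMod (X : Type) [TopologicalSpace X] (𝕜 : Type) [CommRing 𝕜] where
  M : Type
  [acg : AddCommGroup M]
  [mod : Module 𝕜 M]
  act : M → (X → 𝕜) → M
  act_addm : ∀ m n f, act (m + n) f = act m f + act n f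
  act_addf : ∀ m f₁ f₂, f₁ ∈ Cc X 𝕜 → f₂ ∈ Cc X 𝕜 →
    act m (f₁ + f₂) = act m f₁ + act m f₂
  act_smulm : ∀ (c : 𝕜) m f, act (c • m) f = c • act m f
  act_smulf : ∀ (c : 𝕜) m f, f ∈ Cc X 𝕜 → act m (c • f) = c • act m f
  act_mul : ∀ m f₁ f₂, f₁ ∈ Cc X 𝕜 → f₂ ∈ Cc X 𝕜 →
    act (act m f₁) f₂ = act m (f₁ * f₂)
  unitary : ∀ m : M, ∃ K : Set X, IsCompact K ∧ IsOpen K ∧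
    act m (Set.indicator K 1) = m

attribute [instance] UnitaryCcMod.acg UnitaryCcMod.mod

/-- Morphisms of unitary `C_c(X,𝕜)`-modules. -/
structure UnitaryCcModHom {X : Type} [TopologicalSpace X] {𝕜 : Type}
    [CommRing 𝕜] (A B : UnitaryCcMod X 𝕜) where
  toFun : A.M → B.M
  map_add : ∀ m n, toFun (m + n) = toFun m + toFun n
  map_act : ∀ m f, f ∈ Cc X 𝕜 → toFun (A.act m f) = B.act (toFun m) f

instance (X : Type) [TopologicalSpace X] (𝕜 : Type) [CommRing 𝕜] :
    Category (UnitaryCcMod X 𝕜) where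
  Hom := UnitaryCcModHom
  id A := ⟨fun m => m, fun _ _ => rfl, fun _ _ _ => rfl⟩
  comp f g := ⟨fun m => g.toFun (f.toFun m),
    by intro m n; show g.toFun (f.toFun _) = _; rw [f.map_add, g.map_add],
    by intro m h hh; show g.toFun (f.toFun _) = _;
       rw [f.map_act _ _ hh, g.map_act _ _ hh]⟩
  id_comp f := rfl
  comp_id f := rfl
  assoc f g h := rfl
set_option linter.unusedSectionVars false
namespace Aux18

open Set

variable {X : Type} [TopologicalSpace X] {𝕜 : Type} [CommRing 𝕜]

/-- characteristic function -/
noncomputable def ind (U : Set X) : X → 𝕜 := Set.indicator U 1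

lemma ind_of_mem {U : Set X} {x : X} (h : x ∈ U) : (ind U : X → 𝕜) x = 1 := by
  simp [ind, Set.indicator_of_mem h]

lemma ind_of_not_mem {U : Set X} {x : X} (h : x ∉ U) : (ind U : X → 𝕜) x = 0 := by
  simp [ind, Set.indicator_of_notMem h]

lemma ind_mul (U V : Set X) : (ind U : X → 𝕜) * ind V = ind (U ∩ V) := by
  funext x
  show (ind U : X → 𝕜) x * ind V x = _
  by_cases hU : x ∈ U
  · by_cases hV : x ∈ V
    · rw [ind_of_mem hU, ind_of_mem hV, ind_of_mem (Set.mem_inter hU hV), one_mul]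
    · rw [ind_of_not_mem hV, ind_of_not_mem
          (fun h => hV ((Set.mem_inter_iff x U V).1 h).2), mul_zero]
  · rw [ind_of_not_mem hU, ind_of_not_mem
        (fun h => hU ((Set.mem_inter_iff x U V).1 h).1), zero_mul]

lemma ind_empty : (ind (∅ : Set X) : X → 𝕜) = 0 := by
  funext x; simp [ind]

lemma ind_union_disjoint {U V : Set X} (h : Disjoint U V) :
    (ind (U ∪ V) : X → 𝕜) = ind U + ind V := by
  funext x
  simp only [ind, Set.indicator_union_of_disjoint h, Pi.add_apply]

variable [T2Space X]

lemma ind_mem_Cc {U : Set X} (hc : IsCompact U) (ho : IsOpen U) :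
    (ind U : X → 𝕜) ∈ Cc X 𝕜 := by
  constructor
  · rw [IsLocallyConstant.iff_exists_open]
    intro x
    by_cases hx : x ∈ U
    · exact ⟨U, ho, hx, fun y hy => by rw [ind_of_mem hy, ind_of_mem hx]⟩
    · exact ⟨Uᶜ, hc.isClosed.isOpen_compl, hx,
        fun y hy => by rw [ind_of_not_mem hy, ind_of_not_mem hx]⟩
  · exact ⟨U, hc, fun x hx => by
      by_contra h; exact hx (ind_of_not_mem h)⟩

lemma Cc_add {f g : X → 𝕜} (hf : f ∈ Cc X 𝕜) (hg : g ∈ Cc X 𝕜) :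
    f + g ∈ Cc X 𝕜 := by
  obtain ⟨hf1, K₁, hK₁, hs₁⟩ := hf
  obtain ⟨hg1, K₂, hK₂, hs₂⟩ := hg
  refine ⟨hf1.add hg1, K₁ ∪ K₂, hK₁.union hK₂, fun x hx => ?_⟩
  by_cases h1 : f x = 0
  · have : g x ≠ 0 := by
      intro h2; exact hx (by simp [Pi.add_apply, h1, h2])
    exact Or.inr (hs₂ x this)
  · exact Or.inl (hs₁ x h1)

lemma Cc_smul (c : 𝕜) {f : X → 𝕜} (hf : f ∈ Cc X 𝕜) : c • f ∈ Cc X 𝕜 := by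
  obtain ⟨hf1, K, hK, hs⟩ := hf
  refine ⟨?_, K, hK, fun x hx => ?_⟩
  · have h2 := hf1.comp (fun y => c * y)
    have h3 : c • f = (fun y => c * y) ∘ f := by
      funext x; simp [Pi.smul_apply, smul_eq_mul, Function.comp]
    rw [h3]; exact h2
  · apply hs
    intro h; exact hx (by simp [Pi.smul_apply, h])

lemma Cc_mul {f g : X → 𝕜} (hf : f ∈ Cc X 𝕜) (hg : g ∈ Cc X 𝕜) :
    f * g ∈ Cc X 𝕜 := by
  obtain ⟨hf1, K₁, hK₁, hs₁⟩ := hf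
  obtain ⟨hg1, _⟩ := hg
  refine ⟨hf1.mul hg1, K₁, hK₁, fun x hx => ?_⟩
  apply hs₁
  intro h; exact hx (by simp [Pi.mul_apply, h])

lemma Cc_zero : (0 : X → 𝕜) ∈ Cc X 𝕜 := by
  have := @ind_mem_Cc X _ 𝕜 _ _ ∅ isCompact_empty isOpen_empty
  rwa [ind_empty] at this

/-- basis hypothesis abbreviation -/
def Basis (X : Type) [TopologicalSpace X] : Prop :=
  ∀ x : X, ∀ W : Set X, IsOpen W → x ∈ W →
    ∃ K : Set X, x ∈ K ∧ K ⊆ W ∧ IsOpen K ∧ IsCompact K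

lemma exists_compact_open_superset (hb : Basis X) {K : Set X} (hK : IsCompact K) :
    ∃ W : Set X, IsCompact W ∧ IsOpen W ∧ K ⊆ W := by
  choose V hxV _ hVo hVc using fun x : X => hb x Set.univ isOpen_univ (Set.mem_univ x)
  obtain ⟨t, ht⟩ := hK.elim_finite_subcover V hVo
    (fun x hx => Set.mem_iUnion.2 ⟨x, hxV x⟩)
  exact ⟨⋃ i ∈ t, V i, t.isCompact_biUnion (fun i _ => hVc i),
    isOpen_biUnion (fun i _ => hVo i), ht⟩

lemma exists_compact_open_disjoint (hb : Basis X) {K : Set X} (hK : IsClosed K)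
    {x : X} (hx : x ∉ K) :
    ∃ U : Set X, x ∈ U ∧ IsCompact U ∧ IsOpen U ∧ U ∩ K = ∅ := by
  obtain ⟨U, hxU, hUsub, hUo, hUc⟩ := hb x Kᶜ hK.isOpen_compl hx
  exact ⟨U, hxU, hUc, hUo, by
    ext y; simp only [Set.mem_inter_iff, Set.mem_empty_iff_false, iff_false]
    rintro ⟨h1, h2⟩; exact hUsub h1 h2⟩

end Aux18
namespace Aux18
section Sheaf
variable {X : Type} [TopologicalSpace X] {𝕜 : Type} [CommRing 𝕜] {F : SheafMod X 𝕜}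

lemma cont_zero_sec :
    Continuous (fun x => (⟨x, (0 : F.stalk x)⟩ : Σ x, F.stalk x)) :=
  F.continuous_zero

lemma cont_add_sec {s t : ∀ x, F.stalk x}
    (hs : Continuous fun x => (⟨x, s x⟩ : Σ x, F.stalk x))
    (ht : Continuous fun x => (⟨x, t x⟩ : Σ x, F.stalk x)) :
    Continuous fun x => (⟨x, s x + t x⟩ : Σ x, F.stalk x) := by
  have h1 : Continuous (fun x =>
      (⟨(⟨x, s x⟩, ⟨x, t x⟩), rfl⟩ :
        {q : (Σ x, F.stalk x) × (Σ x, F.stalk x) // q.1.1 = q.2.1})) :=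
    Continuous.subtype_mk (hs.prodMk ht) _
  exact F.continuous_add.comp h1

lemma cont_smul_sec (c : 𝕜) {s : ∀ x, F.stalk x}
    (hs : Continuous fun x => (⟨x, s x⟩ : Σ x, F.stalk x)) :
    Continuous fun x => (⟨x, c • s x⟩ : Σ x, F.stalk x) :=
  (F.continuous_smul c).comp hs

lemma cont_neg_sec {s : ∀ x, F.stalk x}
    (hs : Continuous fun x => (⟨x, s x⟩ : Σ x, F.stalk x)) :
    Continuous fun x => (⟨x, -(s x)⟩ : Σ x, F.stalk x) := by
  have := cont_smul_sec (-1 : 𝕜) hs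
  have h2 : (fun x => (⟨x, (-1 : 𝕜) • s x⟩ : Σ x, F.stalk x))
      = fun x => (⟨x, -(s x)⟩ : Σ x, F.stalk x) := by
    funext x; rw [neg_one_smul]
  rwa [h2] at this

/-- `Γc` as a submodule of the product of stalks. -/
noncomputable def ΓcSub (F : SheafMod X 𝕜) : Submodule 𝕜 (∀ x, F.stalk x) where
  carrier := F.Γc
  add_mem' := by
    rintro s t ⟨hs, K₁, hK₁, hs₁⟩ ⟨ht, K₂, hK₂, hs₂⟩
    refine ⟨cont_add_sec hs ht, K₁ ∪ K₂, hK₁.union hK₂, fun x hx => ?_⟩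
    by_cases h1 : s x = 0
    · refine Or.inr (hs₂ x fun h2 => hx ?_)
      show s x + t x = 0; rw [h1, h2, add_zero]
    · exact Or.inl (hs₁ x h1)
  zero_mem' := ⟨cont_zero_sec, ∅, isCompact_empty, fun x hx => absurd rfl hx⟩
  smul_mem' := by
    rintro c s ⟨hs, K, hK, hsupp⟩
    refine ⟨cont_smul_sec c hs, K, hK, fun x hx => hsupp x fun h => hx ?_⟩
    show c • s x = 0; rw [h, smul_zero]

lemma isOpen_sectionImage {s : ∀ x, F.stalk x}
    (hs : Continuous fun x => (⟨x, s x⟩ : Σ x, F.stalk x))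
    {U : Set X} (hU : IsOpen U) :
    IsOpen {e : Σ x, F.stalk x | e.1 ∈ U ∧ e.2 = s e.1} := by
  rw [isOpen_iff_forall_mem_open]
  rintro ⟨x, ex⟩ ⟨hxU, hex⟩
  simp only at hex
  subst hex
  obtain ⟨O, heO, hOo, hinj, himg⟩ := F.etale_proj ⟨x, s x⟩
  set W := U ∩ (fun y => (⟨y, s y⟩ : Σ x, F.stalk x)) ⁻¹' O with hW
  have hWo : IsOpen W := hU.inter (hOo.preimage hs)
  refine ⟨O ∩ Sigma.fst ⁻¹' W, ?_, hOo.inter (hWo.preimage F.continuous_proj),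
    heO, hxU, heO⟩
  rintro ⟨y, ey⟩ ⟨hyO, hyU, hyO'⟩
  have heq : (⟨y, ey⟩ : Σ x, F.stalk x) = ⟨y, s y⟩ := hinj hyO hyO' rfl
  obtain ⟨-, h2⟩ := Sigma.mk.inj_iff.1 heq
  exact ⟨hyU, eq_of_heq h2⟩

lemma isOpen_eqSection {s t : ∀ x, F.stalk x}
    (hs : Continuous fun x => (⟨x, s x⟩ : Σ x, F.stalk x))
    (ht : Continuous fun x => (⟨x, t x⟩ : Σ x, F.stalk x)) :
    IsOpen {x | s x = t x} := by
  rw [isOpen_iff_forall_mem_open]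
  intro x hx
  have hx' : s x = t x := hx
  obtain ⟨O, heO, hOo, hinj, -⟩ := F.etale_proj ⟨x, s x⟩
  refine ⟨(fun y => (⟨y, s y⟩ : Σ x, F.stalk x)) ⁻¹' O ∩
      (fun y => (⟨y, t y⟩ : Σ x, F.stalk x)) ⁻¹' O, ?_,
    (hOo.preimage hs).inter (hOo.preimage ht), heO, ?_⟩
  · intro y ⟨h1, h2⟩
    have heq : (⟨y, s y⟩ : Σ x, F.stalk x) = ⟨y, t y⟩ := hinj h1 h2 rfl
    obtain ⟨-, h3⟩ := Sigma.mk.inj_iff.1 heq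
    exact eq_of_heq h3
  · show (⟨x, t x⟩ : Σ x, F.stalk x) ∈ O
    rw [← hx']; exact heO

variable [T2Space X]

open Classical in
lemma exists_section_through (hb : Basis X) (x : X) (e : F.stalk x) :
    ∃ s : ∀ y, F.stalk y, s ∈ F.Γc ∧ s x = e := by
  obtain ⟨O, heO, hOo, hinj, himg⟩ := F.etale_proj ⟨x, e⟩
  have hxim : x ∈ Sigma.fst '' O := ⟨⟨x, e⟩, heO, rfl⟩
  obtain ⟨K, hxK, hKsub, hKo, hKc⟩ :=
    hb x (Sigma.fst '' O) (himg O (fun _ h => h) hOo) hxim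
  have hch : ∀ y ∈ K, ∃ z : Σ x, F.stalk x, z ∈ O ∧ z.1 = y := by
    intro y hy
    obtain ⟨z, hz, hz1⟩ := hKsub hy
    exact ⟨z, hz, hz1⟩
  set s : ∀ y, F.stalk y := fun y =>
    if h : y ∈ K then
      cast (congrArg F.stalk (hch y h).choose_spec.2) (hch y h).choose.2
    else 0 with hsdef
  have hcast : ∀ (z : Σ x, F.stalk x) (y : X) (hz : z.1 = y),
      (⟨y, cast (congrArg F.stalk hz) z.2⟩ : Σ x, F.stalk x) = z := by
    rintro ⟨a, b⟩ y hz
    simp only at hz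
    subst hz
    rfl
  have key : ∀ (y : X) (h : y ∈ K), (⟨y, s y⟩ : Σ x, F.stalk x) = (hch y h).choose := by
    intro y h
    simp only [hsdef, dif_pos h]
    exact hcast _ _ (hch y h).choose_spec.2
  have hsO : ∀ (y : X) (h : y ∈ K), (⟨y, s y⟩ : Σ x, F.stalk x) ∈ O := by
    intro y h; rw [key y h]; exact (hch y h).choose_spec.1
  have hse : s x = e := by
    have h1 : (⟨x, s x⟩ : Σ x, F.stalk x) = ⟨x, e⟩ := by
      apply hinj (hsO x hxK) heO
      rw [key x hxK]
      exact (hch x hxK).choose_spec.2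
    obtain ⟨-, h2⟩ := Sigma.mk.inj_iff.1 h1
    exact eq_of_heq h2
  have hzero : ∀ y, y ∉ K → s y = 0 := by
    intro y hy; simp only [hsdef, dif_neg hy]
  refine ⟨s, ⟨?_, K, hKc, fun y hy => by
    by_contra h; exact hy (hzero y h)⟩, hse⟩
  rw [continuous_iff_continuousAt]
  intro y
  by_cases hy : y ∈ K
  · rw [continuousAt_def]
    intro A hA
    rw [mem_nhds_iff] at hA
    obtain ⟨O', hO'A, hO'o, hyO'⟩ := hA
    have hVo : IsOpen (K ∩ Sigma.fst '' (O ∩ O')) :=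
      hKo.inter (himg _ (fun _ h => h.1) (hOo.inter hO'o))
    have hyV : y ∈ K ∩ Sigma.fst '' (O ∩ O') :=
      ⟨hy, ⟨⟨y, s y⟩, ⟨hsO y hy, hyO'⟩, rfl⟩⟩
    refine Filter.mem_of_superset (hVo.mem_nhds hyV) ?_
    rintro z ⟨hzK, w, ⟨hwO, hwO'⟩, hwz⟩
    have : w = ⟨z, s z⟩ := hinj hwO (hsO z hzK) (by rw [hwz])
    rw [this] at hwO'
    exact hO'A hwO'
  · have hev : (fun z => (⟨z, s z⟩ : Σ x, F.stalk x)) =ᶠ[nhds y]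
        (fun z => (⟨z, (0 : F.stalk z)⟩ : Σ x, F.stalk x)) := by
      refine Filter.eventuallyEq_of_mem (hKc.isClosed.isOpen_compl.mem_nhds hy) ?_
      intro z hz
      simp only [hzero z hz]
    exact (cont_zero_sec.continuousAt).congr hev.symm

lemma mem_Γc_actSec {f : X → 𝕜} (hf : f ∈ Cc X 𝕜) {s : ∀ x, F.stalk x}
    (hs : s ∈ F.Γc) : F.actSec s f ∈ F.Γc := by
  obtain ⟨hfl, -⟩ := hf
  obtain ⟨hsc, K, hK, hsupp⟩ := hs
  constructor
  · rw [continuous_iff_continuousAt]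
    intro x
    have h1 : ContinuousAt (fun y => (⟨y, f x • s y⟩ : Σ x, F.stalk x)) x :=
      ((F.continuous_smul (f x)).comp hsc).continuousAt
    apply h1.congr
    obtain ⟨U, hUo, hxU, hUconst⟩ := hfl.exists_open x
    refine Filter.eventuallyEq_of_mem (hUo.mem_nhds hxU) (fun y hy => ?_)
    show (⟨y, f x • s y⟩ : Σ x, F.stalk x) = ⟨y, F.actSec s f y⟩
    show (⟨y, f x • s y⟩ : Σ x, F.stalk x) = ⟨y, f y • s y⟩
    rw [hUconst y hy]
  · exact ⟨K, hK, fun x hx => hsupp x fun h => hx (by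
      show f x • s x = 0; rw [h, smul_zero])⟩

end Sheaf
end Aux18
namespace Aux18
section Mod
open TopologicalSpace
variable {X : Type} [TopologicalSpace X] [T2Space X] {𝕜 : Type} [CommRing 𝕜]
variable {A : UnitaryCcMod X 𝕜}

lemma act_zerom (f : X → 𝕜) : A.act 0 f = 0 := by
  have h := A.act_addm 0 0 f
  rw [add_zero] at h
  have h2 : A.act 0 f + A.act 0 f = A.act 0 f + 0 := by rw [add_zero]; exact h.symm
  exact add_left_cancel h2

lemma act_negm (m : A.M) (f : X → 𝕜) : A.act (-m) f = -A.act m f := by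
  have h := A.act_addm m (-m) f
  rw [add_neg_cancel, act_zerom] at h
  exact (eq_neg_of_add_eq_zero_right h.symm)

lemma act_subm (m n : A.M) (f : X → 𝕜) :
    A.act (m - n) f = A.act m f - A.act n f := by
  rw [sub_eq_add_neg, A.act_addm, act_negm, sub_eq_add_neg]

lemma act_zerof (m : A.M) : A.act m 0 = 0 := by
  have h := A.act_addf m 0 0 Cc_zero Cc_zero
  rw [add_zero] at h
  have h2 : A.act m 0 + A.act m 0 = A.act m 0 + 0 := by rw [add_zero]; exact h.symm
  exact add_left_cancel h2

variable (A)

/-- The submodule of elements killed near `x`. -/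
noncomputable def NN (hb : Basis X) (x : X) : Submodule 𝕜 A.M where
  carrier := {m | ∃ U : Set X, x ∈ U ∧ IsCompact U ∧ IsOpen U ∧
    A.act m (ind U) = 0}
  add_mem' := by
    rintro m n ⟨U, hxU, hUc, hUo, hU0⟩ ⟨V, hxV, hVc, hVo, hV0⟩
    refine ⟨U ∩ V, ⟨hxU, hxV⟩, hUc.inter hVc, hUo.inter hVo, ?_⟩
    have h1 : A.act m (ind (U ∩ V)) = 0 := by
      rw [← ind_mul, ← A.act_mul m _ _ (ind_mem_Cc hUc hUo) (ind_mem_Cc hVc hVo),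
        hU0, act_zerom]
    have h2 : A.act n (ind (U ∩ V)) = 0 := by
      rw [Set.inter_comm, ← ind_mul,
        ← A.act_mul n _ _ (ind_mem_Cc hVc hVo) (ind_mem_Cc hUc hUo), hV0, act_zerom]
    rw [A.act_addm, h1, h2, add_zero]
  zero_mem' := by
    obtain ⟨K, hxK, -, hKo, hKc⟩ := hb x Set.univ isOpen_univ (Set.mem_univ x)
    exact ⟨K, hxK, hKc, hKo, act_zerom _⟩
  smul_mem' := by
    rintro c m ⟨U, hxU, hUc, hUo, hU0⟩
    exact ⟨U, hxU, hUc, hUo, by rw [A.act_smulm, hU0, smul_zero]⟩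

/-- Stalk of the germ sheaf. -/
def stalkG (hb : Basis X) (x : X) : Type := A.M ⧸ NN A hb x

noncomputable instance (hb : Basis X) (x : X) : AddCommGroup (stalkG A hb x) :=
  inferInstanceAs (AddCommGroup (A.M ⧸ NN A hb x))

noncomputable instance (hb : Basis X) (x : X) : Module 𝕜 (stalkG A hb x) :=
  inferInstanceAs (Module 𝕜 (A.M ⧸ NN A hb x))

/-- Germ of an element at a point. -/
noncomputable def germ (hb : Basis X) (m : A.M) (x : X) : stalkG A hb x :=
  Submodule.Quotient.mk m

variable {A}

lemma germ_surjective (hb : Basis X) (x : X) (ξ : stalkG A hb x) :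
    ∃ m : A.M, germ A hb m x = ξ :=
  Submodule.Quotient.mk_surjective _ ξ

lemma germ_eq_iff (hb : Basis X) (m n : A.M) (x : X) :
    germ A hb m x = germ A hb n x ↔ m - n ∈ NN A hb x :=
  Submodule.Quotient.eq _

lemma germ_add (hb : Basis X) (m n : A.M) (x : X) :
    germ A hb (m + n) x = germ A hb m x + germ A hb n x := rfl

lemma germ_smul (hb : Basis X) (c : 𝕜) (m : A.M) (x : X) :
    germ A hb (c • m) x = c • germ A hb m x := rfl

lemma germ_zero (hb : Basis X) (x : X) : germ A hb 0 x = 0 := by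
  show Submodule.Quotient.mk 0 = 0
  exact Submodule.Quotient.mk_zero _

lemma germ_eq_zero_iff (hb : Basis X) (m : A.M) (x : X) :
    germ A hb m x = 0 ↔ m ∈ NN A hb x :=
  Submodule.Quotient.mk_eq_zero _

lemma germ_eq_on (hb : Basis X) {m n : A.M} {x : X}
    (h : germ A hb m x = germ A hb n x) :
    ∃ U : Set X, x ∈ U ∧ IsCompact U ∧ IsOpen U ∧
      ∀ y ∈ U, germ A hb m y = germ A hb n y := by
  obtain ⟨U, hxU, hUc, hUo, hU0⟩ := (germ_eq_iff hb m n x).1 h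
  exact ⟨U, hxU, hUc, hUo, fun y hy =>
    (germ_eq_iff hb m n y).2 ⟨U, hy, hUc, hUo, hU0⟩⟩

variable (A)

/-- A basic open of the espace étalé. -/
def basicO (hb : Basis X) (m : A.M) (U : Set X) : Set (Σ x, stalkG A hb x) :=
  {e | e.1 ∈ U ∧ e.2 = germ A hb m e.1}

lemma mem_basicO (hb : Basis X) (m : A.M) (U : Set X) (e : Σ x, stalkG A hb x) :
    e ∈ basicO A hb m U ↔ e.1 ∈ U ∧ e.2 = germ A hb m e.1 := Iff.rfl

/-- Generating opens of the espace étalé. -/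
def gens (hb : Basis X) : Set (Set (Σ x, stalkG A hb x)) :=
  {S | ∃ (m : A.M) (U : Set X), IsOpen U ∧ S = basicO A hb m U}

/-- Topology on the espace étalé. -/
def topG (hb : Basis X) : TopologicalSpace (Σ x, stalkG A hb x) :=
  generateFrom (gens A hb)

variable {A}

lemma isOpen_gen (hb : Basis X) (m : A.M) {U : Set X} (hU : IsOpen U) :
    @IsOpen _ (topG A hb) (basicO A hb m U) :=
  TopologicalSpace.GenerateOpen.basic _ ⟨m, U, hU, rfl⟩

lemma cont_germ_sec (hb : Basis X) (m : A.M) :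
    @Continuous _ _ _ (topG A hb) (fun x => (⟨x, germ A hb m x⟩ : Σ x, stalkG A hb x)) := by
  apply continuous_generateFrom_iff.2
  rintro S ⟨n, U, hU, rfl⟩
  rw [isOpen_iff_forall_mem_open]
  rintro x hx
  obtain ⟨hxU, hgerm⟩ := (mem_basicO A hb n U _).1 hx
  simp only at hgerm
  obtain ⟨V, hxV, -, hVo, hV⟩ := germ_eq_on hb hgerm
  exact ⟨U ∩ V, fun y ⟨hyU, hyV⟩ => (mem_basicO A hb n U _).2 ⟨hyU, hV y hyV⟩,
    hU.inter hVo, hxU, hxV⟩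

end Mod
end Aux18
namespace Aux18
section GobjSec
open TopologicalSpace
variable {X : Type} [TopologicalSpace X] [T2Space X] {𝕜 : Type} [CommRing 𝕜]
variable {A : UnitaryCcMod X 𝕜}

variable (A) in
/-- The germ sheaf of a unitary `C_c(X,𝕜)`-module. -/
noncomputable def Gobj (hb : Basis X) : SheafMod X 𝕜 where
  stalk := stalkG A hb
  addCommGroup := fun _ => inferInstance
  module := fun _ => inferInstance
  topE := topG A hb
  continuous_proj := by
    letI : TopologicalSpace (Σ x, stalkG A hb x) := topG A hb
    rw [continuous_def]
    intro U hU
    rw [isOpen_iff_forall_mem_open]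
    rintro ⟨x, ξ⟩ hx
    obtain ⟨m, rfl⟩ := germ_surjective hb x ξ
    exact ⟨basicO A hb m U, fun e he => he.1, isOpen_gen hb m hU, hx, rfl⟩
  etale_proj := by
    letI : TopologicalSpace (Σ x, stalkG A hb x) := topG A hb
    rintro ⟨x, ξ⟩
    obtain ⟨m, rfl⟩ := germ_surjective hb x ξ
    refine ⟨basicO A hb m Set.univ, ⟨Set.mem_univ x, rfl⟩,
      isOpen_gen hb m isOpen_univ, ?_, ?_⟩
    · rintro ⟨a, α⟩ ⟨-, ha⟩ ⟨b, β⟩ ⟨-, hbb⟩ h1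
      simp only at ha hbb h1
      subst h1
      rw [ha, hbb]
    · intro V hV hVo
      have himage : Sigma.fst '' V =
          (fun x => (⟨x, germ A hb m x⟩ : Σ x, stalkG A hb x)) ⁻¹' V := by
        ext y
        constructor
        · rintro ⟨⟨a, α⟩, haV, rfl⟩
          have h2 := (hV haV).2
          simp only at h2
          show (⟨a, germ A hb m a⟩ : Σ x, stalkG A hb x) ∈ V
          rwa [← h2]
        · intro hy; exact ⟨_, hy, rfl⟩
      rw [himage]
      exact (cont_germ_sec hb m).isOpen_preimage V hVo
  continuous_zero := by
    letI : TopologicalSpace (Σ x, stalkG A hb x) := topG A hb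
    have h : (fun x => (⟨x, (0 : stalkG A hb x)⟩ : Σ x, stalkG A hb x)) =
        fun x => (⟨x, germ A hb 0 x⟩ : Σ x, stalkG A hb x) := by
      funext x; rw [germ_zero]
    show Continuous fun x => (⟨x, (0 : stalkG A hb x)⟩ : Σ x, stalkG A hb x)
    rw [h]
    exact cont_germ_sec hb 0
  continuous_add := by
    letI : TopologicalSpace (Σ x, stalkG A hb x) := topG A hb
    apply continuous_generateFrom_iff.2
    rintro S ⟨p, U, hU, rfl⟩
    rw [isOpen_iff_forall_mem_open]
    rintro ⟨⟨⟨x, ξ⟩, ⟨x', ζ⟩⟩, hq⟩ hmem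
    have hq' : x = x' := hq
    subst hq'
    obtain ⟨m, rfl⟩ := germ_surjective hb x ξ
    obtain ⟨n, rfl⟩ := germ_surjective hb x ζ
    obtain ⟨hxU, hsum⟩ := hmem
    simp only [cast_eq] at hsum hxU
    have hsum' : germ A hb (m + n) x = germ A hb p x := by
      rw [germ_add]; exact hsum
    obtain ⟨W, hxW, -, hWo, hW⟩ := germ_eq_on hb hsum'
    refine ⟨(fun q : {q : (Σ x, stalkG A hb x) × (Σ x, stalkG A hb x) //
        q.1.1 = q.2.1} => q.1.1) ⁻¹' basicO A hb m (U ∩ W) ∩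
        (fun q => q.1.2) ⁻¹' basicO A hb n (U ∩ W), ?_, ?_, ?_, ?_⟩
    · rintro ⟨⟨⟨y, α⟩, ⟨y', β⟩⟩, hq2⟩ ⟨h1, h2⟩
      have hq2' : y = y' := hq2
      subst hq2'
      obtain ⟨⟨hyU, hyW⟩, hα⟩ := h1
      obtain ⟨-, hβ⟩ := h2
      simp only at hα hβ
      refine ⟨hyU, ?_⟩
      show α + cast (congrArg (stalkG A hb) hq2).symm β = germ A hb p y
      rw [cast_eq, hα, hβ, ← germ_add]
      exact hW y hyW
    · exact IsOpen.inter
        (IsOpen.preimage (by exact (continuous_fst.comp continuous_subtype_val))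
          (isOpen_gen hb m (hU.inter hWo)))
        (IsOpen.preimage (by exact (continuous_snd.comp continuous_subtype_val))
          (isOpen_gen hb n (hU.inter hWo)))
    · exact ⟨⟨hxU, hxW⟩, rfl⟩
    · exact ⟨⟨hxU, hxW⟩, rfl⟩
  continuous_smul := by
    intro c
    letI : TopologicalSpace (Σ x, stalkG A hb x) := topG A hb
    apply continuous_generateFrom_iff.2
    rintro S ⟨p, U, hU, rfl⟩
    rw [isOpen_iff_forall_mem_open]
    rintro ⟨x, ξ⟩ hmem
    obtain ⟨m, rfl⟩ := germ_surjective hb x ξ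
    obtain ⟨hxU, hsc⟩ := hmem
    have hsc' : germ A hb (c • m) x = germ A hb p x := hsc
    obtain ⟨W, hxW, -, hWo, hW⟩ := germ_eq_on hb hsc'
    refine ⟨basicO A hb m (U ∩ W), ?_, isOpen_gen hb m (hU.inter hWo),
      ⟨hxU, hxW⟩, rfl⟩
    rintro ⟨y, α⟩ ⟨⟨hyU, hyW⟩, hα⟩
    simp only at hα
    refine ⟨hyU, ?_⟩
    show c • α = germ A hb p y
    rw [hα]
    exact hW y hyW

end GobjSec
end Aux18
namespace Aux18
section GammaSec
variable {X : Type} [TopologicalSpace X] [T2Space X] {𝕜 : Type} [CommRing 𝕜]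
variable {F : SheafMod X 𝕜}

noncomputable instance instΓAcg (F : SheafMod X 𝕜) :
    AddCommGroup {s : ∀ x, F.stalk x // s ∈ F.Γc} :=
  inferInstanceAs (AddCommGroup (ΓcSub F))

noncomputable instance instΓMod (F : SheafMod X 𝕜) :
    Module 𝕜 {s : ∀ x, F.stalk x // s ∈ F.Γc} :=
  inferInstanceAs (Module 𝕜 (ΓcSub F))

open Classical in
/-- The unitary `C_c`-module of compactly supported sections. -/
noncomputable def Γobj (F : SheafMod X 𝕜) (hb : Basis X) : UnitaryCcMod X 𝕜 where
  M := {s : ∀ x, F.stalk x // s ∈ F.Γc}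
  acg := instΓAcg F
  mod := instΓMod F
  act := fun s f =>
    if h : f ∈ Cc X 𝕜 then ⟨F.actSec s.1 f, mem_Γc_actSec h s.2⟩ else 0
  act_addm := by
    intro m n f
    by_cases hf : f ∈ Cc X 𝕜
    · simp only [dif_pos hf]
      apply Subtype.ext
      show F.actSec (m + n).1 f = F.actSec m.1 f + F.actSec n.1 f
      funext x
      show f x • (m.1 x + n.1 x) = f x • m.1 x + f x • n.1 x
      rw [smul_add]
    · simp only [dif_neg hf]
      rw [add_zero]
  act_addf := by
    intro m f₁ f₂ h1 h2
    simp only [dif_pos h1, dif_pos h2, dif_pos (Cc_add h1 h2)]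
    apply Subtype.ext
    show F.actSec m.1 (f₁ + f₂) = F.actSec m.1 f₁ + F.actSec m.1 f₂
    funext x
    show (f₁ x + f₂ x) • m.1 x = f₁ x • m.1 x + f₂ x • m.1 x
    rw [add_smul]
  act_smulm := by
    intro c m f
    by_cases hf : f ∈ Cc X 𝕜
    · simp only [dif_pos hf]
      apply Subtype.ext
      show F.actSec (c • m).1 f = c • F.actSec m.1 f
      funext x
      show f x • (c • m.1 x) = c • (f x • m.1 x)
      rw [smul_comm]
    · simp only [dif_neg hf]
      rw [smul_zero]
  act_smulf := by
    intro c m f hf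
    simp only [dif_pos hf, dif_pos (Cc_smul c hf)]
    apply Subtype.ext
    show F.actSec m.1 (c • f) = c • F.actSec m.1 f
    funext x
    show (c * f x) • m.1 x = c • (f x • m.1 x)
    rw [mul_smul]
  act_mul := by
    intro m f₁ f₂ h1 h2
    simp only [dif_pos h1, dif_pos h2, dif_pos (Cc_mul h1 h2)]
    apply Subtype.ext
    show F.actSec (F.actSec m.1 f₁) f₂ = F.actSec m.1 (f₁ * f₂)
    funext x
    show f₂ x • (f₁ x • m.1 x) = (f₁ x * f₂ x) • m.1 x
    rw [mul_smul]
    exact smul_comm _ _ _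
  unitary := by
    intro m
    obtain ⟨-, K', hK', hsupp⟩ := m.2
    obtain ⟨W, hWc, hWo, hKW⟩ := exists_compact_open_superset hb hK'
    refine ⟨W, hWc, hWo, ?_⟩
    have hmem : Set.indicator W (1 : X → 𝕜) ∈ Cc X 𝕜 := ind_mem_Cc hWc hWo
    simp only [dif_pos hmem]
    apply Subtype.ext
    show F.actSec m.1 (Set.indicator W 1) = m.1
    funext x
    show Set.indicator W (1 : X → 𝕜) x • m.1 x = m.1 x
    by_cases hx : x ∈ W
    · rw [show Set.indicator W (1 : X → 𝕜) x = 1 from ind_of_mem hx, one_smul]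
    · have h0 : m.1 x = 0 := by
        by_contra h
        exact hx (hKW (hsupp x h))
      rw [h0, smul_zero]

lemma Γobj_act {hb : Basis X} {f : X → 𝕜} (hf : f ∈ Cc X 𝕜) (m : (Γobj F hb).M) :
    (Γobj F hb).act m f = ⟨F.actSec m.1 f, mem_Γc_actSec hf m.2⟩ :=
  dif_pos hf

lemma Γobj_val_add {hb : Basis X} (a b : (Γobj F hb).M) :
    (a + b).1 = a.1 + b.1 := rfl

lemma Γobj_val_smul {hb : Basis X} (c : 𝕜) (a : (Γobj F hb).M) :
    (c • a).1 = c • a.1 := rfl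

lemma Γobj_val_zero {hb : Basis X} : ((0 : (Γobj F hb).M)).1 = 0 := rfl

lemma Γobj_val_sub {hb : Basis X} (a b : (Γobj F hb).M) :
    (a - b).1 = a.1 - b.1 := rfl

end GammaSec
end Aux18
namespace Aux18
section Funs
variable {X : Type} [TopologicalSpace X] [T2Space X] {𝕜 : Type} [CommRing 𝕜]

lemma SheafModHom_ext {F₁ F₂ : SheafMod X 𝕜} {f g : SheafModHom F₁ F₂}
    (h : f.map = g.map) : f = g := by
  cases f; cases g
  simp only at h
  subst h
  rfl

lemma UnitaryCcModHom_ext {A B : UnitaryCcMod X 𝕜} {f g : UnitaryCcModHom A B}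
    (h : f.toFun = g.toFun) : f = g := by
  cases f; cases g
  simp only at h
  subst h
  rfl

lemma sheafHom_map_zero {F₁ F₂ : SheafMod X 𝕜} (φ : SheafModHom F₁ F₂) (x : X) :
    φ.map x 0 = 0 := by
  have h := φ.map_add x 0 0
  rw [add_zero] at h
  have h2 : φ.map x 0 + φ.map x 0 = φ.map x 0 + 0 := by rw [add_zero]; exact h.symm
  exact add_left_cancel h2

lemma ccHom_map_zero {A B : UnitaryCcMod X 𝕜} (φ : UnitaryCcModHom A B) :
    φ.toFun 0 = 0 := by
  have h := φ.map_add 0 0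
  rw [add_zero] at h
  have h2 : φ.toFun 0 + φ.toFun 0 = φ.toFun 0 + 0 := by rw [add_zero]; exact h.symm
  exact add_left_cancel h2

lemma ccHom_map_smul {A B : UnitaryCcMod X 𝕜} (φ : UnitaryCcModHom A B)
    (c : 𝕜) (m : A.M) : φ.toFun (c • m) = c • φ.toFun m := by
  obtain ⟨K, hKc, hKo, hK⟩ := A.unitary m
  have hind : Set.indicator K (1 : X → 𝕜) ∈ Cc X 𝕜 := ind_mem_Cc hKc hKo
  have h1 : A.act m (c • Set.indicator K (1 : X → 𝕜)) = c • m := by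
    rw [A.act_smulf c m _ hind, hK]
  have h2 : φ.toFun (c • m) = B.act (φ.toFun m) (c • Set.indicator K 1) := by
    rw [← h1, φ.map_act _ _ (Cc_smul c hind)]
  rw [h2, B.act_smulf c _ _ hind, ← φ.map_act _ _ hind, hK]

/-- A `UnitaryCcModHom` as a linear map. -/
def homLin {A B : UnitaryCcMod X 𝕜} (φ : UnitaryCcModHom A B) : A.M →ₗ[𝕜] B.M where
  toFun := φ.toFun
  map_add' := φ.map_add
  map_smul' := ccHom_map_smul φ

lemma homLin_NN {A B : UnitaryCcMod X 𝕜} (φ : UnitaryCcModHom A B) (hb : Basis X)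
    (x : X) (m : A.M) (hm : m ∈ NN A hb x) : homLin φ m ∈ NN B hb x := by
  obtain ⟨U, hxU, hUc, hUo, hU0⟩ := hm
  refine ⟨U, hxU, hUc, hUo, ?_⟩
  show B.act (φ.toFun m) (ind U) = 0
  rw [← φ.map_act _ _ (ind_mem_Cc hUc hUo), hU0, ccHom_map_zero]

/-- The sheaf morphism induced on germ sheaves. -/
noncomputable def Gmap {A B : UnitaryCcMod X 𝕜} (hb : Basis X)
    (φ : UnitaryCcModHom A B) : SheafModHom (Gobj A hb) (Gobj B hb) where
  map := fun x => Submodule.mapQ (NN A hb x) (NN B hb x) (homLin φ)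
    (fun m hm => homLin_NN φ hb x m hm)
  map_add := fun x a b => map_add _ a b
  map_smul := fun x c a => map_smul _ c a
  continuous_map := by
    letI : TopologicalSpace (Σ x, stalkG A hb x) := topG A hb
    letI : TopologicalSpace (Σ x, stalkG B hb x) := topG B hb
    apply continuous_generateFrom_iff.2
    rintro S ⟨n, U, hU, rfl⟩
    rw [isOpen_iff_forall_mem_open]
    rintro ⟨x, ξ⟩ hmem
    obtain ⟨m, rfl⟩ := germ_surjective hb x ξ
    obtain ⟨hxU, hMap⟩ := hmem
    simp only at hMap
    have hMap' : germ B hb (φ.toFun m) x = germ B hb n x := by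
      rw [← hMap]
      exact (Submodule.mapQ_apply (NN A hb x) (NN B hb x) (homLin φ) m).symm
    obtain ⟨W, hxW, -, hWo, hW⟩ := germ_eq_on hb hMap'
    refine ⟨basicO A hb m (U ∩ W), ?_, isOpen_gen hb m (hU.inter hWo),
      ⟨hxU, hxW⟩, rfl⟩
    rintro ⟨y, α⟩ ⟨⟨hyU, hyW⟩, hα⟩
    simp only at hα
    refine ⟨hyU, ?_⟩
    show Submodule.mapQ _ _ _ _ α = germ B hb n y
    rw [hα, show (germ A hb m y : stalkG A hb y) = Submodule.Quotient.mk m from rfl,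
      Submodule.mapQ_apply]
    exact hW y hyW

/-- The germ functor. -/
noncomputable def Gfun (hb : Basis X) : UnitaryCcMod X 𝕜 ⥤ SheafMod X 𝕜 where
  obj A := Gobj A hb
  map φ := Gmap hb φ
  map_id A := by
    apply SheafModHom_ext
    funext x ξ
    obtain ⟨m, rfl⟩ := Submodule.Quotient.mk_surjective _ ξ
    show Submodule.mapQ _ _ _ _ (Submodule.Quotient.mk m) = Submodule.Quotient.mk m
    rw [Submodule.mapQ_apply]
    rfl
  map_comp f g := by
    apply SheafModHom_ext
    funext x ξ
    obtain ⟨m, rfl⟩ := Submodule.Quotient.mk_surjective _ ξ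
    show Submodule.mapQ _ _ _ _ (Submodule.Quotient.mk m)
      = Submodule.mapQ _ _ _ _ (Submodule.mapQ _ _ _ _ (Submodule.Quotient.mk m))
    rw [Submodule.mapQ_apply, Submodule.mapQ_apply, Submodule.mapQ_apply]
    rfl

/-- The induced map on compactly supported sections. -/
noncomputable def Γmap {F₁ F₂ : SheafMod X 𝕜} (hb : Basis X)
    (φ : SheafModHom F₁ F₂) : UnitaryCcModHom (Γobj F₁ hb) (Γobj F₂ hb) where
  toFun s := ⟨fun x => φ.map x (s.1 x), by
    obtain ⟨hc, K, hK, hsupp⟩ := s.2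
    refine ⟨by exact φ.continuous_map.comp hc, K, hK, fun x hx => ?_⟩
    apply hsupp x
    intro h0
    exact hx (show φ.map x (s.1 x) = 0 by rw [h0, sheafHom_map_zero])⟩
  map_add m n := by
    apply Subtype.ext
    funext x
    show φ.map x ((m + n).1 x) = φ.map x (m.1 x) + φ.map x (n.1 x)
    rw [Γobj_val_add]
    exact φ.map_add x _ _
  map_act m f hf := by
    rw [Γobj_act hf]; erw [Γobj_act hf]
    apply Subtype.ext
    funext x
    show φ.map x (f x • m.1 x) = f x • φ.map x (m.1 x)
    exact φ.map_smul x _ _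

/-- The compactly supported sections functor. -/
noncomputable def Γfun (hb : Basis X) : SheafMod X 𝕜 ⥤ UnitaryCcMod X 𝕜 where
  obj F := Γobj F hb
  map φ := Γmap hb φ
  map_id F := by
    apply UnitaryCcModHom_ext
    funext s
    apply Subtype.ext
    rfl
  map_comp f g := by
    apply UnitaryCcModHom_ext
    funext s
    apply Subtype.ext
    rfl

end Funs
end Aux18
namespace Aux18
section UnitSec
variable {X : Type} [TopologicalSpace X] [T2Space X] {𝕜 : Type} [CommRing 𝕜]
variable (F : SheafMod X 𝕜) (hb : Basis X)

/-- Evaluation of sections at a point, as a linear map. -/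
noncomputable def evalLin (x : X) : (Γobj F hb).M →ₗ[𝕜] F.stalk x where
  toFun s := s.1 x
  map_add' a b := by
    show (a + b).1 x = a.1 x + b.1 x
    rw [Γobj_val_add]; rfl
  map_smul' c a := by
    show (c • a).1 x = c • a.1 x
    rw [Γobj_val_smul]; rfl

lemma NN_le_ker (x : X) (s : (Γobj F hb).M) (hs : s ∈ NN (Γobj F hb) hb x) :
    s.1 x = 0 := by
  obtain ⟨U, hxU, hUc, hUo, hU0⟩ := hs
  rw [Γobj_act (ind_mem_Cc hUc hUo)] at hU0
  have hval : F.actSec s.1 (ind U) = (0 : (Γobj F hb).M).1 :=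
    congrArg Subtype.val hU0
  rw [Γobj_val_zero] at hval
  have hx := congrFun hval x
  rw [show F.actSec s.1 (ind U) x
    = (ind U : X → 𝕜) x • s.1 x from rfl] at hx
  rw [ind_of_mem hxU, one_smul] at hx
  exact hx

/-- The counit-type evaluation morphism `G (Γ F) ⟶ F`. -/
noncomputable def evHom : SheafModHom (Gobj (Γobj F hb) hb) F where
  map x := Submodule.liftQ (NN (Γobj F hb) hb x) (evalLin F hb x)
    (fun s hs => LinearMap.mem_ker.2 (NN_le_ker F hb x s hs))
  map_add x a b := map_add _ a b
  map_smul x c a := map_smul _ c a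
  continuous_map := by
    letI : TopologicalSpace (Σ x, stalkG (Γobj F hb) hb x) := topG (Γobj F hb) hb
    rw [continuous_def]
    intro O hO
    rw [isOpen_iff_forall_mem_open]
    rintro ⟨x, ξ⟩ hmem
    obtain ⟨s, rfl⟩ := germ_surjective hb x ξ
    have hmem' : (⟨x, s.1 x⟩ : Σ x, F.stalk x) ∈ O := hmem
    set V := (fun y => (⟨y, s.1 y⟩ : Σ x, F.stalk x)) ⁻¹' O with hV
    have hVo : IsOpen V := hO.preimage s.2.1
    refine ⟨basicO (Γobj F hb) hb s V, ?_, isOpen_gen hb s hVo, hmem', rfl⟩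
    rintro ⟨y, α⟩ ⟨hyV, hα⟩
    simp only at hα
    show (⟨y, Submodule.liftQ _ _ _ α⟩ : Σ x, F.stalk x) ∈ O
    rw [hα]
    show (⟨y, Submodule.liftQ _ _ _ (Submodule.Quotient.mk s)⟩ : Σ x, F.stalk x) ∈ O
    rw [Submodule.liftQ_apply]
    exact hyV

lemma evHom_mk (x : X) (s : (Γobj F hb).M) :
    (evHom F hb).map x (germ (Γobj F hb) hb s x) = s.1 x :=
  Submodule.liftQ_apply _ _ _

lemma evHom_mk' (x : X) (s : (Γobj F hb).M) :
    (evHom F hb).map x (Submodule.Quotient.mk s) = s.1 x :=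
  Submodule.liftQ_apply _ _ _

lemma evHom_injective (x : X) : Function.Injective ((evHom F hb).map x) := by
  intro a b hab
  obtain ⟨s, rfl⟩ := germ_surjective hb x a
  obtain ⟨t, rfl⟩ := germ_surjective hb x b
  rw [evHom_mk, evHom_mk] at hab
  apply (germ_eq_iff hb s t x).2
  have hZ : IsOpen {y | s.1 y = t.1 y} := isOpen_eqSection s.2.1 t.2.1
  obtain ⟨U, hxU, hUsub, hUo, hUc⟩ := hb x _ hZ hab
  refine ⟨U, hxU, hUc, hUo, ?_⟩
  rw [Γobj_act (ind_mem_Cc hUc hUo)]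
  apply Subtype.ext
  rw [Γobj_val_zero]
  funext y
  show (ind U : X → 𝕜) y • (s - t).1 y = 0
  by_cases hy : y ∈ U
  · have hst : s.1 y = t.1 y := hUsub hy
    have hsub : (s - t).1 y = s.1 y - t.1 y := by rw [Γobj_val_sub]; rfl
    rw [hsub, hst, sub_self, smul_zero]
  · rw [ind_of_not_mem hy, zero_smul]

lemma evHom_surjective (x : X) : Function.Surjective ((evHom F hb).map x) := by
  intro e
  obtain ⟨s, hs, hval⟩ := exists_section_through hb x e
  exact ⟨germ (Γobj F hb) hb ⟨s, hs⟩ x, (evHom_mk F hb x ⟨s, hs⟩).trans hval⟩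

/-- The inverse morphism `F ⟶ G (Γ F)`. -/
noncomputable def evInv : SheafModHom F (Gobj (Γobj F hb) hb) where
  map x := Function.invFun ((evHom F hb).map x)
  map_add x a b := by
    apply evHom_injective F hb x
    show (evHom F hb).map x (Function.invFun ((evHom F hb).map x) (a + b))
      = (evHom F hb).map x (Function.invFun ((evHom F hb).map x) a
        + Function.invFun ((evHom F hb).map x) b)
    rw [(evHom F hb).map_add x, Function.invFun_eq (evHom_surjective F hb x _),
      Function.invFun_eq (evHom_surjective F hb x _),
      Function.invFun_eq (evHom_surjective F hb x _)]
  map_smul x c a := by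
    apply evHom_injective F hb x
    show (evHom F hb).map x (Function.invFun ((evHom F hb).map x) (c • a))
      = (evHom F hb).map x (c • Function.invFun ((evHom F hb).map x) a)
    rw [(evHom F hb).map_smul x, Function.invFun_eq (evHom_surjective F hb x _),
      Function.invFun_eq (evHom_surjective F hb x _)]
  continuous_map := by
    letI : TopologicalSpace (Σ x, stalkG (Γobj F hb) hb x) := topG (Γobj F hb) hb
    apply continuous_generateFrom_iff.2
    rintro S ⟨t, U, hU, rfl⟩
    rw [isOpen_iff_forall_mem_open]
    rintro ⟨x, e⟩ ⟨hxU, hED⟩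
    simp only at hED
    have he : e = t.1 x := by
      rw [← Function.invFun_eq (evHom_surjective F hb x e), hED, evHom_mk]
    refine ⟨{z : Σ x, F.stalk x | z.1 ∈ U ∧ z.2 = t.1 z.1}, ?_,
      isOpen_sectionImage t.2.1 hU, hxU, he⟩
    rintro ⟨y, ey⟩ ⟨hyU, hey⟩
    simp only at hey
    refine ⟨hyU, ?_⟩
    show Function.invFun ((evHom F hb).map y) ey = germ (Γobj F hb) hb t y
    rw [hey]
    apply evHom_injective F hb y
    rw [Function.invFun_eq (evHom_surjective F hb y _), evHom_mk]

/-- The unit isomorphism component. -/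
noncomputable def evIso : (Gobj (Γobj F hb) hb) ≅ F where
  hom := evHom F hb
  inv := evInv F hb
  hom_inv_id := by
    apply SheafModHom_ext
    funext x ξ
    show Function.invFun ((evHom F hb).map x) ((evHom F hb).map x ξ) = ξ
    exact Function.leftInverse_invFun (evHom_injective F hb x) ξ
  inv_hom_id := by
    apply SheafModHom_ext
    funext x e
    show (evHom F hb).map x (Function.invFun ((evHom F hb).map x) e) = e
    exact Function.invFun_eq (evHom_surjective F hb x e)

lemma ev_natural {F₁ F₂ : SheafMod X 𝕜} (φ : SheafModHom F₁ F₂) :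
    (CategoryTheory.CategoryStruct.comp (obj := SheafMod X 𝕜)
        (Gmap hb (Γmap hb φ)) (evHom F₂ hb))
      = CategoryTheory.CategoryStruct.comp (evHom F₁ hb) φ := by
  apply SheafModHom_ext
  funext x ξ
  obtain ⟨s, rfl⟩ := germ_surjective hb x ξ
  show (evHom F₂ hb).map x ((Gmap hb (Γmap hb φ)).map x (Submodule.Quotient.mk s))
    = φ.map x ((evHom F₁ hb).map x (Submodule.Quotient.mk s))
  rw [show (Gmap hb (Γmap hb φ)).map x (Submodule.Quotient.mk s)
    = Submodule.Quotient.mk ((Γmap hb φ).toFun s) from Submodule.mapQ_apply _ _ _ _]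
  rw [evHom_mk', evHom_mk']
  rfl

end UnitSec
end Aux18
namespace Aux18
section CounitSec
variable {X : Type} [TopologicalSpace X] [T2Space X] {𝕜 : Type} [CommRing 𝕜]
variable (A : UnitaryCcMod X 𝕜) (hb : Basis X)

lemma germ_act_eq_on {U : Set X} (hUc : IsCompact U) (hUo : IsOpen U)
    (m : A.M) {y : X} (hy : y ∈ U) :
    germ A hb (A.act m (ind U)) y = germ A hb m y := by
  rw [germ_eq_iff]
  refine ⟨U, hy, hUc, hUo, ?_⟩
  rw [act_subm, A.act_mul m _ _ (ind_mem_Cc hUc hUo) (ind_mem_Cc hUc hUo),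
    ind_mul, Set.inter_self, sub_self]

lemma germ_act_zero {U : Set X} (hUc : IsCompact U) (hUo : IsOpen U)
    (m : A.M) {y : X} (hy : y ∉ U) :
    germ A hb (A.act m (ind U)) y = 0 := by
  rw [germ_eq_zero_iff]
  obtain ⟨V, hyV, hVc, hVo, hVU⟩ := exists_compact_open_disjoint hb hUc.isClosed hy
  refine ⟨V, hyV, hVc, hVo, ?_⟩
  rw [A.act_mul m _ _ (ind_mem_Cc hUc hUo) (ind_mem_Cc hVc hVo), ind_mul,
    Set.inter_comm, hVU, ind_empty, act_zerof]

lemma germ_act_fun {f : X → 𝕜} (hf : f ∈ Cc X 𝕜) (m : A.M) (x : X) :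
    germ A hb (A.act m f) x = f x • germ A hb m x := by
  rw [show f x • germ A hb m x = germ A hb (f x • m) x from rfl, germ_eq_iff]
  obtain ⟨U', hU'o, hxU', hconst⟩ := hf.1.exists_open x
  obtain ⟨U, hxU, hUsub, hUo, hUc⟩ := hb x U' hU'o hxU'
  refine ⟨U, hxU, hUc, hUo, ?_⟩
  have hfU : f * ind U = f x • (ind U : X → 𝕜) := by
    funext y
    show f y * ind U y = f x * ind U y
    by_cases hy : y ∈ U
    · rw [hconst y (hUsub hy)]
    · rw [ind_of_not_mem hy, mul_zero, mul_zero]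
  rw [act_subm, A.act_mul m _ _ hf (ind_mem_Cc hUc hUo), hfU,
    A.act_smulf _ _ _ (ind_mem_Cc hUc hUo), A.act_smulm, sub_self]

lemma act_ind_biUnion_zero (m : A.M) (t : Finset X) (U : X → Set X)
    (h : ∀ i ∈ t, IsCompact (U i) ∧ IsOpen (U i) ∧ A.act m (ind (U i)) = 0) :
    A.act m (ind (⋃ i ∈ t, U i)) = 0 := by
  classical
  induction t using Finset.induction_on with
  | empty =>
    rw [show (⋃ i ∈ (∅ : Finset X), U i) = (∅ : Set X) by simp, ind_empty, act_zerof]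
  | insert a s ha ih =>
    have hUa := h a (Finset.mem_insert_self a s)
    obtain ⟨hac, hao, ha0⟩ := hUa
    have hB : A.act m (ind (⋃ i ∈ s, U i)) = 0 :=
      ih (fun i hi => h i (Finset.mem_insert_of_mem hi))
    set B := ⋃ i ∈ s, U i with hBdef
    have hBc : IsCompact B := s.isCompact_biUnion (fun i hi => (h i (Finset.mem_insert_of_mem hi)).1)
    have hBo : IsOpen B := isOpen_biUnion (fun i hi => (h i (Finset.mem_insert_of_mem hi)).2.1)
    have hstep : (⋃ i ∈ insert a s, U i) = U a ∪ B := by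
      rw [Finset.set_biUnion_insert]
    rw [hstep]
    have hdiffc : IsCompact (B \ U a) :=
      hBc.of_isClosed_subset (hBc.isClosed.inter hao.isClosed_compl) Set.diff_subset
    have hdiffo : IsOpen (B \ U a) := hBo.inter hac.isClosed.isOpen_compl
    have hsplit : U a ∪ B = U a ∪ (B \ U a) := (Set.union_diff_self).symm ▸ rfl
    rw [show U a ∪ B = U a ∪ (B \ U a) from by rw [Set.union_diff_self]]
    rw [ind_union_disjoint Set.disjoint_sdiff_right,
      A.act_addf m _ _ (ind_mem_Cc hac hao) (ind_mem_Cc hdiffc hdiffo), ha0]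
    have hsub : (ind (B \ U a) : X → 𝕜) = ind B * ind (B \ U a) := by
      rw [ind_mul, Set.inter_eq_self_of_subset_right Set.diff_subset]
    rw [hsub, ← A.act_mul m _ _ (ind_mem_Cc hBc hBo) (ind_mem_Cc hdiffc hdiffo),
      hB, act_zerom, zero_add]

lemma germ_all_zero {m : A.M} (h : ∀ x, germ A hb m x = 0) : m = 0 := by
  classical
  obtain ⟨K, hKc, hKo, hK⟩ := A.unitary m
  have hNN : ∀ x : X, ∃ U : Set X, x ∈ U ∧ IsCompact U ∧ IsOpen U ∧
      A.act m (ind U) = 0 := fun x => (germ_eq_zero_iff hb m x).1 (h x)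
  choose U hxU hUc hUo hU0 using hNN
  obtain ⟨t, ht⟩ := hKc.elim_finite_subcover U hUo
    (fun x _ => Set.mem_iUnion.2 ⟨x, hxU x⟩)
  set W := ⋃ i ∈ t, U i with hWdef
  have hW0 : A.act m (ind W) = 0 :=
    act_ind_biUnion_zero A m t U (fun i _ => ⟨hUc i, hUo i, hU0 i⟩)
  have hWc : IsCompact W := t.isCompact_biUnion (fun i _ => hUc i)
  have hWo : IsOpen W := isOpen_biUnion (fun i _ => hUo i)
  have hKW : (ind K : X → 𝕜) = ind K * ind W := by
    rw [ind_mul, Set.inter_eq_self_of_subset_left ht]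
  have hK' : A.act m (ind K) = m := hK
  calc m = A.act m (ind K) := hK'.symm
    _ = A.act m (ind K * ind W) := by rw [← hKW]
    _ = A.act (A.act m (ind K)) (ind W) :=
        (A.act_mul m _ _ (ind_mem_Cc hKc hKo) (ind_mem_Cc hWc hWo)).symm
    _ = A.act m (ind W) := by rw [hK']
    _ = 0 := hW0

/-- The germ-section morphism `A ⟶ Γ (G A)`. -/
noncomputable def sHat : UnitaryCcModHom A (Γobj (Gobj A hb) hb) where
  toFun m := ⟨fun x => germ A hb m x, by
    constructor
    · exact cont_germ_sec hb m
    · obtain ⟨K, hKc, hKo, hK⟩ := A.unitary m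
      refine ⟨K, hKc, fun x hx => ?_⟩
      by_contra hxK
      apply hx
      show germ A hb m x = 0
      rw [← hK]
      exact germ_act_zero A hb hKc hKo m hxK⟩
  map_add m n := by
    apply Subtype.ext
    funext x
    show germ A hb (m + n) x = germ A hb m x + germ A hb n x
    exact germ_add hb m n x
  map_act m f hf := by
    erw [Γobj_act hf]
    apply Subtype.ext
    funext x
    show germ A hb (A.act m f) x = f x • germ A hb m x
    exact germ_act_fun A hb hf m x

lemma sHat_injective : Function.Injective (sHat A hb).toFun := by
  intro m n hmn
  have h : ∀ x, germ A hb m x = germ A hb n x := by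
    intro x
    exact congrFun (congrArg Subtype.val hmn) x
  have h2 : ∀ x, germ A hb (m - n) x = 0 := by
    intro x
    show Submodule.Quotient.mk (m - n) = 0
    rw [Submodule.Quotient.mk_eq_zero]
    exact (germ_eq_iff hb m n x).1 (h x)
  have := germ_all_zero A hb h2
  exact sub_eq_zero.1 this

lemma sHat_surjective : Function.Surjective (sHat A hb).toFun := by
  intro s
  -- local description of the section
  have hloc : ∀ x : X, ∃ (m : A.M) (U : Set X), x ∈ U ∧ IsCompact U ∧ IsOpen U ∧
      ∀ y ∈ U, s.1 y = germ A hb m y := by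
    intro x
    obtain ⟨m, hm⟩ := germ_surjective hb x (s.1 x)
    letI : TopologicalSpace (Σ x, stalkG A hb x) := topG A hb
    have hVo : IsOpen ((fun y => (⟨y, s.1 y⟩ : Σ x, stalkG A hb x)) ⁻¹'
        basicO A hb m Set.univ) :=
      (isOpen_gen hb m isOpen_univ).preimage s.2.1
    have hxV : x ∈ (fun y => (⟨y, s.1 y⟩ : Σ x, stalkG A hb x)) ⁻¹'
        basicO A hb m Set.univ := ⟨Set.mem_univ x, hm.symm⟩
    obtain ⟨U, hxU, hUsub, hUo, hUc⟩ := hb x _ hVo hxV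
    exact ⟨m, U, hxU, hUc, hUo, fun y hy => (hUsub hy).2⟩
  choose mf Uf hxU hUc hUo hagree using hloc
  obtain ⟨hcont, K, hKc, hsupp⟩ := s.2
  obtain ⟨W, hWc, hWo, hKW⟩ := exists_compact_open_superset hb hKc
  -- glue over any compact open subset of a finite union
  have glue : ∀ t : Finset X, ∀ V : Set X, IsCompact V → IsOpen V →
      V ⊆ ⋃ i ∈ t, Uf i → ∃ m : A.M, ∀ y ∈ V, s.1 y = germ A hb m y := by
    classical
    intro t
    induction t using Finset.induction_on with
    | empty =>
      intro V _ _ hsub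
      refine ⟨0, fun y hy => absurd (hsub hy) (by simp)⟩
    | insert a r ha ih =>
      intro V hVc hVo hsub
      have hV₁c : IsCompact (V ∩ Uf a) := hVc.inter (hUc a)
      have hV₁o : IsOpen (V ∩ Uf a) := hVo.inter (hUo a)
      have hV₂c : IsCompact (V \ Uf a) :=
        hVc.of_isClosed_subset (hVc.isClosed.inter (hUo a).isClosed_compl)
          Set.diff_subset
      have hV₂o : IsOpen (V \ Uf a) := hVo.inter (hUc a).isClosed.isOpen_compl
      have hV₂sub : V \ Uf a ⊆ ⋃ i ∈ r, Uf i := by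
        intro y hy
        have := hsub hy.1
        rw [Finset.set_biUnion_insert] at this
        rcases this with h1 | h2
        · exact absurd h1 hy.2
        · exact h2
      obtain ⟨m₂, hm₂⟩ := ih (V \ Uf a) hV₂c hV₂o hV₂sub
      refine ⟨A.act (mf a) (ind (V ∩ Uf a)) + A.act m₂ (ind (V \ Uf a)),
        fun y hy => ?_⟩
      rw [show germ A hb (A.act (mf a) (ind (V ∩ Uf a)) + A.act m₂ (ind (V \ Uf a))) y
        = germ A hb (A.act (mf a) (ind (V ∩ Uf a))) y
          + germ A hb (A.act m₂ (ind (V \ Uf a))) y from germ_add hb _ _ y]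
      by_cases hya : y ∈ Uf a
      · rw [germ_act_eq_on A hb hV₁c hV₁o _ ⟨hy, hya⟩,
          germ_act_zero A hb hV₂c hV₂o _ (fun h => h.2 hya), add_zero]
        exact hagree a y hya
      · rw [germ_act_zero A hb hV₁c hV₁o _ (fun h => hya h.2),
          germ_act_eq_on A hb hV₂c hV₂o _ ⟨hy, hya⟩, zero_add]
        exact hm₂ y ⟨hy, hya⟩
  obtain ⟨t, ht⟩ := hWc.elim_finite_subcover Uf hUo
    (fun x _ => Set.mem_iUnion.2 ⟨x, hxU x⟩)
  obtain ⟨m₀, hm₀⟩ := glue t W hWc hWo ht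
  refine ⟨A.act m₀ (ind W), ?_⟩
  apply Subtype.ext
  funext x
  show germ A hb (A.act m₀ (ind W)) x = s.1 x
  by_cases hx : x ∈ W
  · rw [germ_act_eq_on A hb hWc hWo _ hx]
    exact (hm₀ x hx).symm
  · rw [germ_act_zero A hb hWc hWo _ hx]
    by_contra h
    have hne : s.1 x ≠ 0 := fun h0 => h h0.symm
    exact hx (hKW (hsupp x hne))

/-- The inverse morphism `Γ (G A) ⟶ A`. -/
noncomputable def sHatInv : UnitaryCcModHom (Γobj (Gobj A hb) hb) A where
  toFun := Function.invFun (sHat A hb).toFun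
  map_add m n := by
    apply sHat_injective A hb
    rw [(sHat A hb).map_add, Function.invFun_eq (sHat_surjective A hb _),
      Function.invFun_eq (sHat_surjective A hb _),
      Function.invFun_eq (sHat_surjective A hb _)]
  map_act m f hf := by
    apply sHat_injective A hb
    rw [(sHat A hb).map_act _ _ hf, Function.invFun_eq (sHat_surjective A hb _),
      Function.invFun_eq (sHat_surjective A hb _)]

/-- The counit isomorphism component. -/
noncomputable def sIso : A ≅ (Γobj (Gobj A hb) hb) where
  hom := sHat A hb
  inv := sHatInv A hb
  hom_inv_id := by
    apply UnitaryCcModHom_ext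
    funext m
    show Function.invFun (sHat A hb).toFun ((sHat A hb).toFun m) = m
    exact Function.leftInverse_invFun (sHat_injective A hb) m
  inv_hom_id := by
    apply UnitaryCcModHom_ext
    funext s
    show (sHat A hb).toFun (Function.invFun (sHat A hb).toFun s) = s
    exact Function.invFun_eq (sHat_surjective A hb s)

lemma sHat_natural {A B : UnitaryCcMod X 𝕜} (φ : UnitaryCcModHom A B) :
    (CategoryTheory.CategoryStruct.comp (obj := UnitaryCcMod X 𝕜)
        φ (sHat B hb))
      = CategoryTheory.CategoryStruct.comp (sHat A hb) (Γmap hb (Gmap hb φ)) := by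
  apply UnitaryCcModHom_ext
  funext m
  apply Subtype.ext
  funext x
  show germ B hb (φ.toFun m) x = (Gmap hb φ).map x (germ A hb m x)
  exact (Submodule.mapQ_apply (NN A hb x) (NN B hb x) (homLin φ) m).symm

end CounitSec
end Aux18
namespace Aux18
section Assemble
open CategoryTheory
variable {X : Type} [TopologicalSpace X] [T2Space X] {𝕜 : Type} [CommRing 𝕜]

/-- The unit natural isomorphism. -/
noncomputable def unitIso (hb : Basis X) :
    Functor.id (SheafMod X 𝕜) ≅ Γfun hb ⋙ Gfun (𝕜 := 𝕜) hb :=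
  NatIso.ofComponents (fun F => (evIso F hb).symm) (by
    intro F₁ F₂ φ
    show φ ≫ (evIso F₂ hb).inv = (evIso F₁ hb).inv ≫ (Γfun hb ⋙ Gfun hb).map φ
    erw [Iso.comp_inv_eq, Category.assoc]
    have h2 : (Γfun hb ⋙ Gfun hb).map φ ≫ (evIso F₂ hb).hom
        = (evIso F₁ hb).hom ≫ φ := ev_natural hb φ
    erw [h2, ← Category.assoc, Iso.inv_hom_id, Category.id_comp])

/-- The counit natural isomorphism. -/
noncomputable def counitIso (hb : Basis X) :
    Gfun hb ⋙ Γfun (𝕜 := 𝕜) hb ≅ Functor.id (UnitaryCcMod X 𝕜) :=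
  NatIso.ofComponents (fun A => (sIso A hb).symm) (by
    intro A B φ
    show (Gfun hb ⋙ Γfun hb).map φ ≫ (sIso B hb).inv = (sIso A hb).inv ≫ φ
    erw [Iso.comp_inv_eq, Category.assoc]
    have h2 : φ ≫ (sIso B hb).hom = (sIso A hb).hom ≫ (Gfun hb ⋙ Γfun hb).map φ :=
      sHat_natural hb φ
    erw [h2, ← Category.assoc, Iso.inv_hom_id, Category.id_comp])

/-- The equivalence of categories. -/
noncomputable def theEquiv (hb : Basis X) :
    SheafMod X 𝕜 ≌ UnitaryCcMod X 𝕜 :=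
  CategoryTheory.Equivalence.mk (Γfun hb) (Gfun hb) (unitIso hb) (counitIso hb)

lemma theEquiv_functor_obj (hb : Basis X) (F : SheafMod X 𝕜) :
    (theEquiv (𝕜 := 𝕜) hb).functor.obj F = Γobj F hb := rfl

end Assemble
end Aux18

/-- For a Hausdorff space `X` with a basis of compact open sets
and a commutative unital ring `𝕜`, the category of sheaves of `𝕜`-modules on
`X` is equivalent to the category of unitary right `C_c(X,𝕜)`-modules, via the
compactly supported sections functor (with action `(s·f)(x) = f(x)s(x)`) and the
germ functor. -/
theorem sheaves_equivalent_to_Cc_modules (X : Type) [TopologicalSpace X]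
    [T2Space X]
    (hbasis : ∀ x : X, ∀ W : Set X, IsOpen W → x ∈ W →
      ∃ K : Set X, x ∈ K ∧ K ⊆ W ∧ IsOpen K ∧ IsCompact K)
    (𝕜 : Type) [CommRing 𝕜] :
    ∃ e : SheafMod X 𝕜 ≌ UnitaryCcMod X 𝕜,
      ∀ F : SheafMod X 𝕜,
        ∃ h : (e.functor.obj F).M = {s : ∀ x, F.stalk x // s ∈ F.Γc},
          ∀ (m : (e.functor.obj F).M) (f : X → 𝕜), f ∈ Cc X 𝕜 →
            (cast h ((e.functor.obj F).act m f) :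
                {s : ∀ x, F.stalk x // s ∈ F.Γc}).1
              = F.actSec (cast h m).1 f := by
  have hb : Aux18.Basis X := hbasis
  refine ⟨Aux18.theEquiv hb, fun F => ⟨rfl, fun m f hf => ?_⟩⟩
  erw [cast_eq, cast_eq]
  show ((Aux18.Γobj F hb).act m f).1 = F.actSec m.1 f
  erw [Aux18.Γobj_act hf]
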